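/- Let f : G → G be a continuous map of a finite graph sending vertices to vertices. If v is a vertex of G, then f(v) need not be fixed, but if f sends every vertex to a fixed point of f, then for every edge path σ in G, the endpoints of the tightened images f_#^j(σ) are the same for all j ≥ 1; consequently, if f is a homotopy equivalence and f_#^k(σ) is a single point for some k ≥ 1, then f_#(σ) is already a single point. -/

import Mathlib

open CategoryTheory FundamentalGroupoid FundamentalGroupoidFunctor
open scoped ContinuousMap

lemma hom_equiv_map_injective' {T : TopCat} (e : T ≃ₕ T) {a b : T} (p q : Path a b)
    (h : (p.map e.toFun.continuous).Homotopic (q.map e.toFun.continuous)) :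
    p.Homotopic q := by
  let E : πₓ T ≌ πₓ T := equivOfHomotopyEquiv e
  have key : (πₘ (TopCat.ofHom e.toFun)).map ⟦p⟧ = (πₘ (TopCat.ofHom e.toFun)).map ⟦q⟧ := by
    change (⟦p.map e.toFun.continuous⟧ : Path.Homotopic.Quotient _ _) = ⟦q.map e.toFun.continuous⟧
    exact Quotient.sound h
  exact Quotient.exact (E.functor.map_injective key)

lemma hom_equiv_map_injective {X : Type} [TopologicalSpace X]
    (e : ContinuousMap.HomotopyEquiv X X) {a b : X} (p q : Path a b)
    (h : (p.map e.toFun.continuous).Homotopic (q.map e.toFun.continuous)) :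
    p.Homotopic q :=
  hom_equiv_map_injective' (T := TopCat.of X) e p q h

lemma iter_inj {X : Type} [TopologicalSpace X] (e : ContinuousMap.HomotopyEquiv X X) :
    ∀ (m : ℕ) {a b : X} (p q : Path a b),
      (p.map (e.toFun.continuous.iterate m)).Homotopic
        (q.map (e.toFun.continuous.iterate m)) → p.Homotopic q := by
  intro m
  induction m with
  | zero =>
    intro a b p q h
    have hp : p.map (e.toFun.continuous.iterate 0) = p := by ext t; simp
    have hq : q.map (e.toFun.continuous.iterate 0) = q := by ext t; simp
    rwa [hp, hq] at h
  | succ m ih =>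
    intro a b p q h
    have hp : p.map (e.toFun.continuous.iterate (m+1))
        = (p.map e.toFun.continuous).map (e.toFun.continuous.iterate m) := by
      ext t; simp [Function.iterate_succ_apply]
    have hq : q.map (e.toFun.continuous.iterate (m+1))
        = (q.map e.toFun.continuous).map (e.toFun.continuous.iterate m) := by
      ext t; simp [Function.iterate_succ_apply]
    rw [hp, hq] at h
    exact hom_equiv_map_injective e p q (ih _ _ h)

theorem stmt2 {X : Type} [TopologicalSpace X] (f : X → X) (hf : Continuous f)
    (e : ContinuousMap.HomotopyEquiv X X) (he : ∀ z : X, e.toFun z = f z)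
    (x y : X) (σ : Path x y)
    (hx : f (f x) = f x) (hy : f (f y) = f y) :
    (∀ j : ℕ, 1 ≤ j → f^[j] x = f x ∧ f^[j] y = f y) ∧
    (∀ k : ℕ, 1 ≤ k → ∀ hk : f^[k] x = f^[k] y,
      (σ.map (hf.iterate k)).Homotopic ((Path.refl (f^[k] x)).cast rfl hk.symm) →
      ∃ h1 : f x = f y,
        (σ.map hf).Homotopic ((Path.refl (f x)).cast rfl h1.symm)) := by
  have hef : f = ⇑e.toFun := (funext he).symm
  subst hef
  set f := ⇑e.toFun with hfdef
  have hiterx : ∀ m : ℕ, f^[m] (f x) = f x := by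
    intro m; induction m with
    | zero => rfl
    | succ m ih => rw [Function.iterate_succ_apply, hx, ih]
  have hitery : ∀ m : ℕ, f^[m] (f y) = f y := by
    intro m; induction m with
    | zero => rfl
    | succ m ih => rw [Function.iterate_succ_apply, hy, ih]
  have part1 : ∀ j : ℕ, 1 ≤ j → f^[j] x = f x ∧ f^[j] y = f y := by
    intro j hj
    obtain ⟨m, rfl⟩ : ∃ m, j = m + 1 := ⟨j - 1, by omega⟩
    exact ⟨by rw [Function.iterate_succ_apply, hiterx],
           by rw [Function.iterate_succ_apply, hitery]⟩
  refine ⟨part1, ?_⟩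
  intro k hk1 hk h
  obtain ⟨m, rfl⟩ : ∃ m, k = m + 1 := ⟨k - 1, by omega⟩
  have h1 : f x = f y :=
    ((part1 (m+1) (by omega)).1).symm.trans (hk.trans (part1 (m+1) (by omega)).2)
  refine ⟨h1, ?_⟩
  set p := σ.map hf with hp
  set r := (Path.refl (f x)).cast rfl h1.symm with hr
  have e1 : p.map (hf.iterate m) = σ.map (hf.iterate (m+1)) := by
    ext t; simp [hp, Function.iterate_succ_apply, Path.map_coe]; rfl
  have e2 : r.map (hf.iterate m)
      = (Path.refl (f^[m+1] x)).cast rfl hk.symm := by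
    ext t; simp [hr, Function.iterate_succ_apply, hiterx, Path.cast_coe]; exact (hiterx m).symm
  rw [← e1, ← e2] at h
  exact iter_inj e m p r h
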